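/- Let A (n×n) and B (m×m) be square ℕ-matrices and let (R,S) be a shift equivalence from A to B. Then Rᵀ maps the subgroup (I − Aᵀ)ℤⁿ into (I − Bᵀ)ℤᵐ, and the induced map Ř : BF(A) → BF(B), Ř(v + (I−Aᵀ)ℤⁿ) = Rᵀ v + (I−Bᵀ)ℤᵐ, is a well-defined group isomorphism whose inverse is the map Š : BF(B) → BF(A) induced by Sᵀ, i.e., Š(w + (I−Bᵀ)ℤᵐ) = Sᵀ w + (I−Aᵀ)ℤⁿ. -/

import Mathlib

open Matrix

/-- `(R,S)` is a shift equivalence of lag `l` from the `n × n` ℕ-matrix `A` to the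
`m × m` ℕ-matrix `B`. -/
def IsShiftEquivalence {n m : ℕ} (A : Matrix (Fin n) (Fin n) ℕ) (B : Matrix (Fin m) (Fin m) ℕ)
    (R : Matrix (Fin n) (Fin m) ℕ) (S : Matrix (Fin m) (Fin n) ℕ) (l : ℕ) : Prop :=
  1 ≤ l ∧ A ^ l = R * S ∧ B ^ l = S * R ∧ A * R = R * B ∧ B * S = S * A

/-- `(R,S)` is a unital shift equivalence of lag `l` from `A` to `B`:
a shift equivalence such that `(Bᵀ)^p Rᵀ 𝟙 = (Bᵀ)^(p+q) 𝟙` for some `p q : ℕ`. -/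
def IsUnitalShiftEquivalence {n m : ℕ} (A : Matrix (Fin n) (Fin n) ℕ)
    (B : Matrix (Fin m) (Fin m) ℕ)
    (R : Matrix (Fin n) (Fin m) ℕ) (S : Matrix (Fin m) (Fin n) ℕ) (l : ℕ) : Prop :=
  IsShiftEquivalence A B R S l ∧
    ∃ p q : ℕ, (Bᵀ ^ p) *ᵥ (Rᵀ *ᵥ fun _ => 1) = (Bᵀ ^ (p + q)) *ᵥ (fun _ => 1)

/-- `A` and `B` are unitally shift equivalent. -/
def UnitallyShiftEquivalent {n m : ℕ} (A : Matrix (Fin n) (Fin n) ℕ)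
    (B : Matrix (Fin m) (Fin m) ℕ) : Prop :=
  ∃ (l : ℕ) (R : Matrix (Fin n) (Fin m) ℕ) (S : Matrix (Fin m) (Fin n) ℕ),
    IsUnitalShiftEquivalence A B R S l

/-- `A` and `B` are shift equivalent. -/
def ShiftEquivalent {n m : ℕ} (A : Matrix (Fin n) (Fin n) ℕ)
    (B : Matrix (Fin m) (Fin m) ℕ) : Prop :=
  ∃ (l : ℕ) (R : Matrix (Fin n) (Fin m) ℕ) (S : Matrix (Fin m) (Fin n) ℕ),
    IsShiftEquivalence A B R S l

/-- The subgroup `(I - Aᵀ)ℤⁿ` of `ℤⁿ`. -/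
def BFSubgroup {n : ℕ} (A : Matrix (Fin n) (Fin n) ℕ) : AddSubgroup (Fin n → ℤ) :=
  AddMonoidHom.range
    (Matrix.mulVecLin (1 - (A.map (Nat.cast : ℕ → ℤ))ᵀ)).toAddMonoidHom

/-- The Bowen–Franks group `BF(A) = ℤⁿ/(I - Aᵀ)ℤⁿ`. -/
def BFGroup {n : ℕ} (A : Matrix (Fin n) (Fin n) ℕ) : Type :=
  (Fin n → ℤ) ⧸ BFSubgroup A

instance {n : ℕ} (A : Matrix (Fin n) (Fin n) ℕ) : AddCommGroup (BFGroup A) :=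
  QuotientAddGroup.Quotient.addCommGroup (BFSubgroup A)

/-- The class of `v ∈ ℤⁿ` in the Bowen–Franks group of `A`. -/
def BFGroup.mk {n : ℕ} (A : Matrix (Fin n) (Fin n) ℕ) (v : Fin n → ℤ) : BFGroup A :=
  QuotientAddGroup.mk v


private lemma castMap_mul {a b c : ℕ} (M : Matrix (Fin a) (Fin b) ℕ)
    (N : Matrix (Fin b) (Fin c) ℕ) :
    (M * N).map (Nat.cast : ℕ → ℤ) = M.map (Nat.cast : ℕ → ℤ) * N.map (Nat.cast : ℕ → ℤ) := by
  ext i j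
  simp [Matrix.mul_apply, Matrix.map_apply]

private lemma castMap_pow {a : ℕ} (M : Matrix (Fin a) (Fin a) ℕ) (l : ℕ) :
    (M ^ l).map (Nat.cast : ℕ → ℤ) = (M.map (Nat.cast : ℕ → ℤ)) ^ l := by
  induction l with
  | zero => ext i j; simp [Matrix.one_apply, Matrix.map_apply, apply_ite]
  | succ k ih => rw [pow_succ, castMap_mul, ih, pow_succ]

/-- auxiliary: descend `v ↦ Mᵀ *ᵥ v` to the quotient. -/
private def bfHom {n m : ℕ} (A : Matrix (Fin n) (Fin n) ℕ) (B : Matrix (Fin m) (Fin m) ℕ)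
    (M : Matrix (Fin n) (Fin m) ℤ)
    (h : Mᵀ * (1 - (A.map (Nat.cast : ℕ → ℤ))ᵀ) = (1 - (B.map (Nat.cast : ℕ → ℤ))ᵀ) * Mᵀ) :
    BFGroup A →+ BFGroup B :=
  QuotientAddGroup.lift _ ((QuotientAddGroup.mk' (BFSubgroup B)).comp
    (Matrix.mulVecLin Mᵀ).toAddMonoidHom) (by
      rintro v hv
      obtain ⟨u, rfl⟩ := hv
      show QuotientAddGroup.mk (Mᵀ *ᵥ ((1 - (A.map (Nat.cast : ℕ → ℤ))ᵀ) *ᵥ u)) = 0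
      rw [QuotientAddGroup.eq_zero_iff, BFSubgroup, AddMonoidHom.mem_range]
      refine ⟨Mᵀ *ᵥ u, ?_⟩
      simp only [LinearMap.toAddMonoidHom_coe, Matrix.mulVecLin_apply,
        Matrix.mulVec_mulVec, h])

private lemma bfHom_mk {n m : ℕ} (A : Matrix (Fin n) (Fin n) ℕ) (B : Matrix (Fin m) (Fin m) ℕ)
    (M : Matrix (Fin n) (Fin m) ℤ) (h) (v : Fin n → ℤ) :
    bfHom A B M h (BFGroup.mk A v) = BFGroup.mk B (Mᵀ *ᵥ v) := rfl

/-- **Statement 7.** If `(R,S)` is a shift equivalence from `A` to `B`, then `Rᵀ` maps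
`(I - Aᵀ)ℤⁿ` into `(I - Bᵀ)ℤᵐ`, and the induced map `Ř : BF(A) → BF(B)`,
`v + (I-Aᵀ)ℤⁿ ↦ Rᵀ v + (I-Bᵀ)ℤᵐ`, is a well-defined group isomorphism whose inverse is
the map induced by `Sᵀ`. -/

theorem shiftEquivalence_induces_BowenFranks_isomorphism
    {n m : ℕ} (A : Matrix (Fin n) (Fin n) ℕ) (B : Matrix (Fin m) (Fin m) ℕ)
    (R : Matrix (Fin n) (Fin m) ℕ) (S : Matrix (Fin m) (Fin n) ℕ) (l : ℕ)
    (hSE : IsShiftEquivalence A B R S l) :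
    (∀ v ∈ BFSubgroup A, (R.map (Nat.cast : ℕ → ℤ))ᵀ *ᵥ v ∈ BFSubgroup B) ∧
    ∃ Rcheck : BFGroup A ≃+ BFGroup B,
      (∀ v : Fin n → ℤ,
        Rcheck (BFGroup.mk A v) = BFGroup.mk B ((R.map (Nat.cast : ℕ → ℤ))ᵀ *ᵥ v)) ∧
      (∀ w : Fin m → ℤ,
        Rcheck.symm (BFGroup.mk B w) = BFGroup.mk A ((S.map (Nat.cast : ℕ → ℤ))ᵀ *ᵥ w)) := by
  obtain ⟨hl, hAl, hBl, hAR, hBS⟩ := hSE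
  set A' : Matrix (Fin n) (Fin n) ℤ := A.map Nat.cast with hA'
  set B' : Matrix (Fin m) (Fin m) ℤ := B.map Nat.cast with hB'
  set R' : Matrix (Fin n) (Fin m) ℤ := R.map Nat.cast with hR'
  set S' : Matrix (Fin m) (Fin n) ℤ := S.map Nat.cast with hS'
  have hAR' : A' * R' = R' * B' := by
    rw [hA', hB', hR', ← castMap_mul, ← castMap_mul, hAR]
  have hBS' : B' * S' = S' * A' := by
    rw [hA', hB', hS', ← castMap_mul, ← castMap_mul, hBS]
  have hAl' : A' ^ l = R' * S' := by
    rw [hA', hR', hS', ← castMap_mul, ← castMap_pow, hAl]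
  have hBl' : B' ^ l = S' * R' := by
    rw [hB', hR', hS', ← castMap_mul, ← castMap_pow, hBl]
  have hRcomm : R'ᵀ * (1 - A'ᵀ) = (1 - B'ᵀ) * R'ᵀ := by
    have := congrArg Matrix.transpose hAR'
    rw [Matrix.transpose_mul, Matrix.transpose_mul] at this
    rw [Matrix.mul_sub, Matrix.sub_mul, Matrix.mul_one, Matrix.one_mul, this]
  have hScomm : S'ᵀ * (1 - B'ᵀ) = (1 - A'ᵀ) * S'ᵀ := by
    have := congrArg Matrix.transpose hBS'
    rw [Matrix.transpose_mul, Matrix.transpose_mul] at this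
    rw [Matrix.mul_sub, Matrix.sub_mul, Matrix.mul_one, Matrix.one_mul, ← this]
  -- power congruence: (Tᵀ)^l v ≡ v
  have geom : ∀ {k : ℕ} (T : Matrix (Fin k) (Fin k) ℤ) (v : Fin k → ℤ),
      v - (T ^ l) *ᵥ v ∈ AddMonoidHom.range (Matrix.mulVecLin (1 - T)).toAddMonoidHom := by
    intro k T v
    refine ⟨(∑ i ∈ Finset.range l, T ^ i) *ᵥ v, ?_⟩
    have hg : (1 - T) * (∑ i ∈ Finset.range l, T ^ i) = 1 - T ^ l :=
      mul_neg_geom_sum T l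
    simp only [LinearMap.toAddMonoidHom_coe, Matrix.mulVecLin_apply, Matrix.mulVec_mulVec, hg,
      Matrix.sub_mulVec, Matrix.one_mulVec]
  have hmem : ∀ v ∈ BFSubgroup A, R'ᵀ *ᵥ v ∈ BFSubgroup B := by
    rintro v ⟨u, rfl⟩
    refine ⟨R'ᵀ *ᵥ u, ?_⟩
    simp only [LinearMap.toAddMonoidHom_coe, Matrix.mulVecLin_apply,
      Matrix.mulVec_mulVec, hRcomm]
    exact congrArg (fun M => M *ᵥ u) hRcomm.symm
  refine ⟨hmem, ?_⟩
  have hAtpow : S'ᵀ * R'ᵀ = A'ᵀ ^ l := by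
    rw [← Matrix.transpose_mul, ← hAl', ← Matrix.transpose_pow]
  have hBtpow : R'ᵀ * S'ᵀ = B'ᵀ ^ l := by
    rw [← Matrix.transpose_mul, ← hBl', ← Matrix.transpose_pow]
  let f : BFGroup A →+ BFGroup B := bfHom A B R' hRcomm
  let g : BFGroup B →+ BFGroup A := bfHom B A S' hScomm
  have hgf : ∀ x : BFGroup A, g (f x) = x := by
    intro x
    induction x using QuotientAddGroup.induction_on with
    | H v =>
      show g (f (BFGroup.mk A v)) = BFGroup.mk A v
      rw [bfHom_mk, bfHom_mk]
      show QuotientAddGroup.mk _ = QuotientAddGroup.mk _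
      rw [QuotientAddGroup.eq]
      have : S'ᵀ *ᵥ R'ᵀ *ᵥ v = (A'ᵀ ^ l) *ᵥ v := by
        rw [Matrix.mulVec_mulVec, hAtpow]
      rw [this]
      have := geom A'ᵀ v
      simpa [neg_add_eq_sub] using (show v - (A'ᵀ ^ l) *ᵥ v ∈ BFSubgroup A from this)
  have hfg : ∀ x : BFGroup B, f (g x) = x := by
    intro x
    induction x using QuotientAddGroup.induction_on with
    | H w =>
      show f (g (BFGroup.mk B w)) = BFGroup.mk B w
      rw [bfHom_mk, bfHom_mk]
      show QuotientAddGroup.mk _ = QuotientAddGroup.mk _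
      rw [QuotientAddGroup.eq]
      have : R'ᵀ *ᵥ S'ᵀ *ᵥ w = (B'ᵀ ^ l) *ᵥ w := by
        rw [Matrix.mulVec_mulVec, hBtpow]
      rw [this]
      have := geom B'ᵀ w
      simpa [neg_add_eq_sub] using (show w - (B'ᵀ ^ l) *ᵥ w ∈ BFSubgroup B from this)
  refine ⟨AddEquiv.mk' ⟨f, g, hgf, hfg⟩ f.map_add, ?_, ?_⟩
  · intro v; exact bfHom_mk A B R' hRcomm v
  · intro w; exact bfHom_mk B A S' hScomm w
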